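/- Let V : ℤ → ℤ[T,T⁻¹] satisfy the Jones recurrence V(e+2) = (T³ − T)·V(e+1) + T⁴·V(e) for all e : ℤ. Then: (a) for every e, deg V(e−2) ≤ max(deg V(e−1), deg V(e)) − 1 in WithBot ℤ; (b) for every e and every m ≥ 2, deg V(e−m) ≤ max(deg V(e−1), deg V(e)) − (m − 1); in particular, there exists e₀ such that for every e ≤ e₀ the support of V(e) is contained in the nonpositive integers (V(e) is a polynomial in T⁻¹), and for every N : ℤ there exists e₁ such that deg V(e) ≤ N for all e ≤ e₁. -/

import Mathlib

/-- The degree of a Laurent polynomial `f`, viewed as a finitely supported function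
`ℤ → ℤ`: the maximum of its support in `WithBot ℤ` (so `jdeg 0 = ⊥`). -/
noncomputable def jdeg (f : LaurentPolynomial ℤ) : WithBot ℤ :=
  (f.coeff : ℤ →₀ ℤ).support.max

open scoped Pointwise

lemma jdeg_le_iff {f : LaurentPolynomial ℤ} {b : WithBot ℤ} :
    jdeg f ≤ b ↔ ∀ n ∈ (f.coeff : ℤ →₀ ℤ).support, (n : WithBot ℤ) ≤ b := by
  constructor
  · intro h n hn
    exact le_trans (Finset.le_max hn) h
  · exact Finset.max_le

lemma le_jdeg {f : LaurentPolynomial ℤ} {n : ℤ} (hn : n ∈ (f.coeff : ℤ →₀ ℤ).support) :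
    (n : WithBot ℤ) ≤ jdeg f := Finset.le_max hn

lemma jdeg_add_le (f g : LaurentPolynomial ℤ) :
    jdeg (f + g) ≤ max (jdeg f) (jdeg g) := by
  rw [jdeg_le_iff]
  intro n hn
  rcases Finset.mem_union.1 (Finsupp.support_add hn) with h | h
  · exact le_trans (le_jdeg h) (le_max_left _ _)
  · exact le_trans (le_jdeg h) (le_max_right _ _)

lemma jdeg_neg (f : LaurentPolynomial ℤ) : jdeg (-f) = jdeg f := by
  unfold jdeg
  congr 1
  exact Finsupp.support_neg (f.coeff : ℤ →₀ ℤ)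

lemma jdeg_mul_le (f g : LaurentPolynomial ℤ) :
    jdeg (f * g) ≤ jdeg f + jdeg g := by
  rw [jdeg_le_iff]
  intro n hn
  obtain ⟨a, ha, b, hb, rfl⟩ := Finset.mem_add.1 (AddMonoidAlgebra.support_coeff_mul_subset f g hn)
  calc ((a + b : ℤ) : WithBot ℤ) = (a : WithBot ℤ) + (b : WithBot ℤ) := by push_cast; ring
    _ ≤ jdeg f + jdeg g := add_le_add (le_jdeg ha) (le_jdeg hb)

open LaurentPolynomial in
lemma jdeg_T_sub_T_le : jdeg ((T (-1) - T (-3) : LaurentPolynomial ℤ)) ≤ ((-1 : ℤ) : WithBot ℤ) := by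
  have h1 : ((T (-1) : LaurentPolynomial ℤ)).degree ≤ ((-1 : ℤ) : WithBot ℤ) := degree_T_le _
  have h3 : ((T (-3) : LaurentPolynomial ℤ)).degree ≤ ((-3 : ℤ) : WithBot ℤ) := degree_T_le _
  have : jdeg ((T (-1) - T (-3) : LaurentPolynomial ℤ)) ≤
      max (jdeg (T (-1))) (jdeg (-(T (-3)))) := by
    rw [sub_eq_add_neg]; exact jdeg_add_le _ _
  refine this.trans (max_le ?_ ?_)
  · exact h1
  · rw [jdeg_neg]
    exact h3.trans (by norm_num)

open LaurentPolynomial in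
lemma jdeg_T_le (n : ℤ) : jdeg (T n : LaurentPolynomial ℤ) ≤ (n : WithBot ℤ) := degree_T_le n

open LaurentPolynomial in
/-- The key backward-step identity. -/
lemma jones_back (V : ℤ → LaurentPolynomial ℤ)
    (hV : ∀ e : ℤ, V (e + 2) = (T 3 - T 1) * V (e + 1) + T 4 * V e) (e : ℤ) :
    V (e - 2) = T (-4) * V e - (T (-1) - T (-3)) * V (e - 1) := by
  have h := hV (e - 2)
  have h2 : e - 2 + 2 = e := by ring
  have h1 : e - 2 + 1 = e - 1 := by ring
  rw [h2, h1] at h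
  have hT : (T (-4) : LaurentPolynomial ℤ) * T 4 = 1 := by
    rw [← T_add]; norm_num
  calc V (e - 2) = (T (-4) * T 4) * V (e - 2) := by rw [hT, one_mul]
    _ = T (-4) * (T 4 * V (e - 2)) := by ring
    _ = T (-4) * (V e - (T 3 - T 1) * V (e - 1)) := by rw [eq_sub_of_add_eq' h.symm]
    _ = T (-4) * V e - (T (-4) * T 3 - T (-4) * T 1) * V (e - 1) := by ring
    _ = T (-4) * V e - (T (-1) - T (-3)) * V (e - 1) := by
        rw [← T_add, ← T_add]; norm_num

open LaurentPolynomial in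
/-- The strong (a)-step bound. -/
lemma jones_step (V : ℤ → LaurentPolynomial ℤ)
    (hV : ∀ e : ℤ, V (e + 2) = (T 3 - T 1) * V (e + 1) + T 4 * V e) (e : ℤ) :
    jdeg (V (e - 2)) ≤
      max (jdeg (V (e - 1)) + ((-1 : ℤ) : WithBot ℤ)) (jdeg (V e) + ((-4 : ℤ) : WithBot ℤ)) := by
  rw [jones_back V hV e, sub_eq_add_neg]
  refine (jdeg_add_le _ _).trans (max_le ?_ ?_)
  · refine le_trans (jdeg_mul_le _ _) (le_trans ?_ (le_max_right _ _))
    rw [add_comm (jdeg (V e))]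
    exact add_le_add_left (jdeg_T_le (-4)) _
  · rw [jdeg_neg]
    refine le_trans (jdeg_mul_le _ _) (le_trans ?_ (le_max_left _ _))
    rw [add_comm (jdeg (V (e - 1)))]
    exact add_le_add_left jdeg_T_sub_T_le _

open LaurentPolynomial in
/-- **Proposition 3.6**. If `V : ℤ → ℤ[T,T⁻¹]` satisfies the Jones recurrence, then
(a) `deg V(e−2) ≤ max(deg V(e−1), deg V(e)) − 1` for every `e`;
(b) `deg V(e−m) ≤ max(deg V(e−1), deg V(e)) − (m−1)` for every `e` and `m ≥ 2`;
in particular, for `e ≪ 0`, `V e` is a polynomial in `T⁻¹` (its support consists of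
nonpositive integers) and `deg V(e) → −∞` as `e → −∞`. -/
theorem jones_degree_negative_side (V : ℤ → LaurentPolynomial ℤ)
    (hV : ∀ e : ℤ, V (e + 2) = (T 3 - T 1) * V (e + 1) + T 4 * V e) :
    (∀ e : ℤ, jdeg (V (e - 2)) ≤ max (jdeg (V (e - 1))) (jdeg (V e)) + ((-1 : ℤ) : WithBot ℤ)) ∧
    (∀ (e : ℤ) (m : ℕ), 2 ≤ m →
      jdeg (V (e - m)) ≤
        max (jdeg (V (e - 1))) (jdeg (V e)) + ((1 - (m : ℤ) : ℤ) : WithBot ℤ)) ∧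
    (∃ e₀ : ℤ, ∀ e : ℤ, e ≤ e₀ → ∀ n ∈ ((V e).coeff : ℤ →₀ ℤ).support, n ≤ 0) ∧
    (∀ N : ℤ, ∃ e₁ : ℤ, ∀ e : ℤ, e ≤ e₁ → jdeg (V e) ≤ (N : WithBot ℤ)) := by
  -- part (a)
  have parta : ∀ e : ℤ,
      jdeg (V (e - 2)) ≤ max (jdeg (V (e - 1))) (jdeg (V e)) + ((-1 : ℤ) : WithBot ℤ) := by
    intro e
    refine (jones_step V hV e).trans (max_le ?_ ?_)
    · exact add_le_add_left (le_max_left _ _) _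
    · refine le_trans (add_le_add_right (by norm_num : ((-4 : ℤ) : WithBot ℤ) ≤ ((-1 : ℤ) : WithBot ℤ)) _) ?_
      exact add_le_add_left (le_max_right _ _) _
  -- part (b), strengthened pair induction
  have partb : ∀ (e : ℤ) (m : ℕ), 1 ≤ m →
      jdeg (V (e - m)) ≤
        max (jdeg (V (e - 1))) (jdeg (V e)) + ((1 - (m : ℤ) : ℤ) : WithBot ℤ) ∧
      jdeg (V (e - (m + 1 : ℕ))) ≤
        max (jdeg (V (e - 1))) (jdeg (V e)) + ((-(m : ℤ) : ℤ) : WithBot ℤ) := by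
    intro e m hm
    set M := max (jdeg (V (e - 1))) (jdeg (V e)) with hM
    induction m with
    | zero => omega
    | succ k ih =>
      rcases Nat.eq_or_lt_of_le hm with h1 | h1
      · -- k + 1 = 1, i.e. k = 0
        have hk : k = 0 := by omega
        subst hk
        constructor
        · have h1' : e - ((0 + 1 : ℕ) : ℤ) = e - 1 := by push_cast; ring
          have h2' : ((1 - ((0 + 1 : ℕ) : ℤ) : ℤ) : WithBot ℤ) = 0 := by push_cast; norm_num
          rw [h1', h2', add_zero]
          exact le_max_left _ _
        · convert parta e using 3 <;> push_cast <;> ring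
      · have hk : 1 ≤ k := by omega
        obtain ⟨ihb1, ihb2⟩ := ih hk
        constructor
        · convert ihb2 using 3 <;> push_cast <;> ring
        · -- bound for e - (k + 2)
          have key := jones_step V hV (e - k)
          have e1 : e - (k : ℤ) - 2 = e - ((k + 1 + 1 : ℕ) : ℤ) := by push_cast; ring
          have e2 : e - (k : ℤ) - 1 = e - ((k + 1 : ℕ) : ℤ) := by push_cast; ring
          rw [e1, e2] at key
          refine key.trans (max_le ?_ ?_)
          · refine (add_le_add_left ihb2 _).trans ?_
            rw [add_assoc]
            refine add_le_add_right ?_ _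
            rw [← WithBot.coe_add]
            exact WithBot.coe_le_coe.2 (by push_cast; ring_nf; omega)
          · refine (add_le_add_left ihb1 _).trans ?_
            rw [add_assoc]
            refine add_le_add_right ?_ _
            rw [← WithBot.coe_add]
            exact WithBot.coe_le_coe.2 (by push_cast; ring_nf; omega)
  have partb' : ∀ (e : ℤ) (m : ℕ), 2 ≤ m →
      jdeg (V (e - m)) ≤
        max (jdeg (V (e - 1))) (jdeg (V e)) + ((1 - (m : ℤ) : ℤ) : WithBot ℤ) := by
    intro e m hm
    exact (partb e m (by omega)).1
  -- part (d) : degrees go to -infinity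
  have partd : ∀ N : ℤ, ∃ e₁ : ℤ, ∀ e : ℤ, e ≤ e₁ → jdeg (V e) ≤ (N : WithBot ℤ) := by
    intro N
    set M := max (jdeg (V (0 - 1))) (jdeg (V 0)) with hM
    rcases eq_or_ne M ⊥ with hbot | hne
    · refine ⟨-2, fun e he => ?_⟩
      have hm2 : 2 ≤ (-e).toNat := by omega
      have hcast : e = 0 - ((-e).toNat : ℤ) := by omega
      have := partb' 0 (-e).toNat hm2
      rw [← hcast] at this
      rw [← hM, hbot] at this
      simpa using this.trans bot_le
    · obtain ⟨d, hd⟩ := WithBot.ne_bot_iff_exists.1 hne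
      refine ⟨min (-2) (N - d - 1), fun e he => ?_⟩
      have hm2 : 2 ≤ (-e).toNat := by omega
      have hcast : e = 0 - ((-e).toNat : ℤ) := by omega
      have hb := partb' 0 (-e).toNat hm2
      rw [← hcast, ← hM, ← hd] at hb
      refine hb.trans ?_
      rw [← WithBot.coe_add]
      refine WithBot.coe_le_coe.2 ?_
      omega
  refine ⟨parta, partb', ?_, partd⟩
  obtain ⟨e₁, he₁⟩ := partd 0
  refine ⟨e₁, fun e he n hn => ?_⟩
  have : (n : WithBot ℤ) ≤ ((0 : ℤ) : WithBot ℤ) := le_trans (le_jdeg hn) (he₁ e he)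
  exact_mod_cast this
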